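/- Let q be an odd prime power with q ≡ 2 (mod 3). Then (x² + x + 1)^{q-2} ≡ G(x) (mod (T^q - T)·F_q[T]), i.e., (T²+T+1)^{q-2} and G(T) agree as functions on F_q, where G is as in the previous definition. Equivalently, (T²+T+1)²·G(T) ≡ T²+T+1 ≡ (T²+T+1)^q (mod T^q - T). -/

import Mathlib

/-- The quadratic character modulo 3. -/
def chi3 (n : ℤ) : ℤ := if n % 3 = 1 then 1 else if n % 3 = 2 then -1 else 0

open Polynomial in
theorem stmt4 (F : Type*) [Field F] [Fintype F] (q : ℕ) (hq : Fintype.card F = q)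
    (hodd : Odd q) (h3 : q % 3 = 2)
    (G : F[X])
    (hG : G = 1 + C (3 : F)⁻¹ *
        (∑ k ∈ Finset.Icc 2 (q - 2), C ((chi3 (k : ℤ) + chi3 (1 - (k : ℤ)) : ℤ) : F) * X ^ (k - 1))
      + C (3 : F)⁻¹ * X ^ (q - 2) - C (2 / 3 : F) * X ^ (q - 1)) :
    (X ^ q - X : F[X]) ∣ (X ^ 2 + X + 1) ^ (q - 2) - G := by
  have h2q : 1 < Fintype.card F := Fintype.one_lt_card
  have hq5 : 5 ≤ q := by
    have h2 := Nat.odd_iff.mp hodd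
    omega
  have hqF : ((q : ℕ) : F) = 0 := by rw [← hq]; exact FiniteField.cast_card_eq_zero F
  have h3F : (3 : F) ≠ 0 := by
    intro h
    have hd : ringChar F ∣ 3 := ringChar.dvd (by exact_mod_cast h)
    have hdq : ringChar F ∣ q := ringChar.dvd (by exact_mod_cast hqF)
    rcases (Nat.prime_three.eq_one_or_self_of_dvd _ hd) with h1 | h1
    · exact CharP.char_ne_one F (ringChar F) h1
    · rw [h1] at hdq; omega
  -- n : number of k ≡ 2 mod 3 in [2, q-2]
  set n : ℕ := (q - 2) / 3 with hn
  have hn3 : 3 * n = q - 2 := by omega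
  -- key coefficient computation
  have hc : ∀ k : ℕ, ((chi3 (k : ℤ) + chi3 (1 - (k : ℤ)) : ℤ) : F)
      = 1 - 3 * (if k % 3 = 2 then 1 else 0) := by
    intro k
    have hck : chi3 (k : ℤ) + chi3 (1 - (k : ℤ)) = if k % 3 = 2 then -2 else 1 := by
      unfold chi3; split_ifs <;> omega
    rw [hck]; split_ifs <;> norm_num
  -- no element of F satisfies a^2 + a + 1 = 0
  have hpow1 : ∀ a : F, a ≠ 0 → a ^ (q - 1) = 1 := by
    intro a ha
    rw [← hq]
    exact FiniteField.pow_card_sub_one_eq_one a ha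
  have hbne : ∀ a : F, a ^ 2 + a + 1 ≠ 0 := by
    intro a h
    have ha1 : a ≠ 1 := by
      rintro rfl
      apply h3F
      have : (1 : F) ^ 2 + 1 + 1 = 3 := by norm_num
      rw [this] at h; exact h
    have ha0 : a ≠ 0 := by rintro rfl; simp at h
    have ha3 : a ^ 3 = 1 := by
      have h0 : a ^ 3 - 1 = (a - 1) * (a ^ 2 + a + 1) := by ring
      have h1 : a ^ 3 - 1 = 0 := by rw [h0, h, mul_zero]
      linear_combination h1
    have hd1 : orderOf a ∣ 3 := orderOf_dvd_of_pow_eq_one ha3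
    have hd2 : orderOf a ∣ q - 1 := orderOf_dvd_of_pow_eq_one (hpow1 a ha0)
    have hdg : orderOf a ∣ Nat.gcd 3 (q - 1) := Nat.dvd_gcd hd1 hd2
    have hgcd : Nat.gcd 3 (q - 1) = 1 := by
      rw [Nat.gcd_rec]
      have : (q - 1) % 3 = 1 := by omega
      rw [this]
      simp
    rw [hgcd, Nat.dvd_one, orderOf_eq_one_iff] at hdg
    exact ha1 hdg
  -- the central evaluation identity
  have key : ∀ a : F, (a ^ 2 + a + 1) * eval a G = 1 := by
    intro a
    have hGa : eval a G = 1 + 3⁻¹ *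
        (∑ k ∈ Finset.Icc 2 (q - 2), ((chi3 (k : ℤ) + chi3 (1 - (k : ℤ)) : ℤ) : F) * a ^ (k - 1))
        + 3⁻¹ * a ^ (q - 2) - (2 / 3) * a ^ (q - 1) := by
      rw [hG]
      simp [eval_finset_sum]
    rcases eq_or_ne a 0 with rfl | ha0
    · have hz : (∑ k ∈ Finset.Icc 2 (q - 2),
          ((chi3 (k : ℤ) + chi3 (1 - (k : ℤ)) : ℤ) : F) * (0:F) ^ (k - 1)) = 0 := by
        apply Finset.sum_eq_zero
        intro k hk
        rw [Finset.mem_Icc] at hk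
        rw [zero_pow (by omega), mul_zero]
      rw [hGa, hz, zero_pow (by omega : q - 2 ≠ 0), zero_pow (by omega : q - 1 ≠ 0)]
      ring
    · -- a ≠ 0
      have hpa : a ^ (q - 1) = 1 := hpow1 a ha0
      have haq : a * a ^ (q - 2) = 1 := by
        rw [← pow_succ']
        have : q - 2 + 1 = q - 1 := by omega
        rw [this, hpa]
      set S1 : F := ∑ j ∈ Finset.range (q - 1), a ^ j with hS1def
      set S2 : F := ∑ m ∈ Finset.range n, (a ^ 3) ^ m with hS2def
      -- plain sum
      have TA : (∑ k ∈ Finset.Icc 2 (q - 2), a ^ (k - 1))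
          = ∑ i ∈ Finset.range (q - 3), a ^ (i + 1) := by
        have hIcc : Finset.Icc 2 (q - 2) = Finset.Ico 2 (q - 1) := by
          rw [← Finset.Ico_add_one_right_eq_Icc]
          congr 1
          omega
        rw [hIcc, Finset.sum_Ico_eq_sum_range]
        have hqq : q - 1 - 2 = q - 3 := by omega
        rw [hqq]
        apply Finset.sum_congr rfl
        intro i _
        congr 1
        omega
      have TA' : S1 = (∑ i ∈ Finset.range (q - 3), a ^ (i + 1)) + a ^ (q - 2) + 1 := by
        have h1 : q - 1 = (q - 2) + 1 := by omega
        have h2 : q - 2 = (q - 3) + 1 := by omega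
        rw [hS1def, h1, Finset.sum_range_succ']
        rw [h2, Finset.sum_range_succ, ← h2]
        rw [pow_zero]
      -- filtered sum
      have TB : (∑ k ∈ (Finset.Icc 2 (q - 2)).filter (fun k => k % 3 = 2), a ^ (k - 1))
          = a * S2 := by
        have himg : (Finset.Icc 2 (q - 2)).filter (fun k => k % 3 = 2)
            = Finset.image (fun m => 3 * m + 2) (Finset.range n) := by
          ext k
          simp only [Finset.mem_filter, Finset.mem_Icc, Finset.mem_image, Finset.mem_range]
          constructor
          · rintro ⟨⟨h1, h2⟩, h3⟩
            exact ⟨(k - 2) / 3, by omega, by omega⟩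
          · rintro ⟨m, hm, rfl⟩
            omega
        rw [himg, Finset.sum_image (by intro x _ y _ h; simp only at h; omega)]
        rw [hS2def, Finset.mul_sum]
        apply Finset.sum_congr rfl
        intro m _
        have he : 3 * m + 2 - 1 = 3 * m + 1 := by omega
        rw [he, pow_succ, ← pow_mul, mul_comm]
      -- the coefficient sum
      have hsum : (∑ k ∈ Finset.Icc 2 (q - 2),
          ((chi3 (k : ℤ) + chi3 (1 - (k : ℤ)) : ℤ) : F) * a ^ (k - 1))
          = (S1 - 1 - a ^ (q - 2)) - 3 * (a * S2) := by
        have e1 : ∀ k ∈ Finset.Icc 2 (q - 2),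
            ((chi3 (k : ℤ) + chi3 (1 - (k : ℤ)) : ℤ) : F) * a ^ (k - 1)
            = a ^ (k - 1) - 3 * (if k % 3 = 2 then a ^ (k - 1) else 0) := by
          intro k _
          rw [hc k]
          split_ifs <;> ring
        rw [Finset.sum_congr rfl e1, Finset.sum_sub_distrib, ← Finset.mul_sum,
          ← Finset.sum_filter, TA, TB]
        linear_combination -TA'
      have hg : eval a G = 3⁻¹ * S1 - a * S2 := by
        rw [hGa, hsum, hpa]
        field_simp
        ring
      rcases eq_or_ne a 1 with rfl | ha1
      · -- a = 1
        have hS1v : S1 = -1 := by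
          have h1 : S1 = ((q - 1 : ℕ) : F) := by
            rw [hS1def]
            simp
          rw [h1, Nat.cast_sub (by omega)]
          rw [hqF]
          norm_num
        have hS2v : (3 : F) * S2 = -2 := by
          have h1 : S2 = ((n : ℕ) : F) := by
            rw [hS2def]
            simp
          rw [h1, ← Nat.cast_ofNat, ← Nat.cast_mul, hn3, Nat.cast_sub (by omega), hqF]
          norm_num
        have hinv : (3 : F) * 3⁻¹ = 1 := mul_inv_cancel₀ h3F
        rw [hg]
        linear_combination (3 * (3:F)⁻¹) * hS1v - hS2v - hinv
      · -- a ≠ 1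
        have ha1' : a - 1 ≠ 0 := sub_ne_zero.mpr ha1
        have hS1z : S1 = 0 := by
          have hgm := geom_sum_mul a (q - 1)
          rw [← hS1def, hpa, sub_self] at hgm
          rcases mul_eq_zero.mp hgm with h | h
          · exact h
          · exact absurd h ha1'
        have hS2m : S2 * (a ^ 3 - 1) = a ^ (q - 2) - 1 := by
          have hgm := geom_sum_mul (a ^ 3) n
          rw [← hS2def, ← pow_mul, hn3] at hgm
          exact hgm
        rw [hg, hS1z]
        apply mul_left_cancel₀ ha1'
        linear_combination (-a) * hS2m - haq
  -- now the divisibility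
  have hmon : (X ^ q - X : F[X]).Monic := by
    have h1 : q = (q - 1) + 1 := by omega
    rw [h1]
    apply monic_X_pow_sub
    rw [degree_X]
    exact_mod_cast (by omega : 1 < q - 1 + 1)
  have hroots : (X ^ q - X : F[X]).roots = Finset.univ.val := by
    rw [← hq]
    exact FiniteField.roots_X_pow_card_sub_X F
  have hdeg : (X ^ q - X : F[X]).natDegree = q := by
    rw [← hq]
    exact FiniteField.X_pow_card_sub_X_natDegree_eq F h2q
  have hsplit : (X ^ q - X : F[X]) = ∏ a : F, (X - C a) := by
    have hcard : Multiset.card (X ^ q - X : F[X]).roots = (X ^ q - X : F[X]).natDegree := by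
      rw [hroots, hdeg]
      change Finset.univ.card = q
      rw [Finset.card_univ, hq]
    have h := prod_multiset_X_sub_C_of_monic_of_roots_card_eq hmon hcard
    rw [hroots] at h
    rw [← h]
    rfl
  rw [hsplit]
  apply Finset.prod_dvd_of_coprime
  · exact (Polynomial.pairwise_coprime_X_sub_C (Function.injective_id (α := F))).set_pairwise _
  · intro a _
    rw [Polynomial.dvd_iff_isRoot]
    have hbinv : eval a G = (a ^ 2 + a + 1) ^ (q - 2) := by
      have hb : (a ^ 2 + a + 1) ≠ 0 := hbne a
      have hp : (a ^ 2 + a + 1) ^ (q - 2) * (a ^ 2 + a + 1) = 1 := by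
        rw [← pow_succ]
        have : q - 2 + 1 = q - 1 := by omega
        rw [this, ← hq]
        exact FiniteField.pow_card_sub_one_eq_one _ hb
      apply mul_left_cancel₀ hb
      rw [key a]
      rw [mul_comm] at hp
      rw [hp]
    simp [Polynomial.IsRoot, hbinv]
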